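/- Let B be an n×d real matrix with full column rank (so BᵀB is invertible). Then ‖BBᵀ − B(BᵀB)^{-1}Bᵀ‖_F = ‖Id_d − BᵀB‖_F. -/
import Mathlib

open Matrix

noncomputable def frobNorm {m n : ℕ} (A : Matrix (Fin m) (Fin n) ℝ) : ℝ :=
  Real.sqrt (Matrix.trace (Aᵀ * A))

theorem frob_norm_proj_approx {n d : ℕ} (B : Matrix (Fin n) (Fin d) ℝ)
    [Invertible (Bᵀ * B)] :
    frobNorm (B * Bᵀ - B * (Bᵀ * B)⁻¹ * Bᵀ) = frobNorm ((1 : Matrix (Fin d) (Fin d) ℝ) - Bᵀ * B) := by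
  unfold frobNorm
  congr 1
  have hM : (B * Bᵀ - B * (Bᵀ * B)⁻¹ * Bᵀ)ᵀ = B * Bᵀ - B * (Bᵀ * B)⁻¹ * Bᵀ := by
    simp [transpose_sub, transpose_mul, Matrix.transpose_nonsing_inv, Matrix.mul_assoc]
  have hN : ((1 : Matrix (Fin d) (Fin d) ℝ) - Bᵀ * B)ᵀ = 1 - Bᵀ * B := by
    simp [transpose_sub, transpose_mul]
  rw [hM, hN]
  rw [sub_mul, mul_sub, mul_sub, sub_mul, mul_sub, mul_sub]
  simp only [trace_sub, mul_one, one_mul]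
  have c1 : trace (B * Bᵀ * (B * Bᵀ)) = trace (Bᵀ * B * (Bᵀ * B)) := by
    rw [Matrix.mul_assoc, trace_mul_comm]
    simp [Matrix.mul_assoc]
  have c2 : trace (B * Bᵀ * (B * (Bᵀ * B)⁻¹ * Bᵀ)) = trace (Bᵀ * B) := by
    rw [Matrix.mul_assoc, trace_mul_comm]
    simp [Matrix.mul_assoc, Matrix.inv_mul_of_invertible]
  have c3 : trace (B * (Bᵀ * B)⁻¹ * Bᵀ * (B * Bᵀ)) = trace (Bᵀ * B) := by
    rw [trace_mul_comm]; exact c2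
  have c4 : trace (B * (Bᵀ * B)⁻¹ * Bᵀ * (B * (Bᵀ * B)⁻¹ * Bᵀ)) =
      trace (1 : Matrix (Fin d) (Fin d) ℝ) := by
    have h4 : B * (Bᵀ * B)⁻¹ * Bᵀ * (B * (Bᵀ * B)⁻¹ * Bᵀ) =
        B * (Bᵀ * B)⁻¹ * (Bᵀ * B) * ((Bᵀ * B)⁻¹ * Bᵀ) := by
      simp only [Matrix.mul_assoc]
    rw [h4, Matrix.inv_mul_cancel_right_of_invertible, ← Matrix.mul_assoc,
      Matrix.mul_assoc, trace_mul_comm]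
    simp [Matrix.mul_assoc, Matrix.inv_mul_of_invertible]
  rw [c1, c2, c3, c4]
  ring
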